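/- Let p ∈ ℝ and φ₁, φ₂ ∈ ℝ. Define ϱ = |(1 − e^{iφ₁} − e^{iφ₂}) − (1 − e^{iφ₁})(1 − e^{iφ₂})·p|². Then 1 − ϱ = (p − 1)·κ, where κ = 4(2p − 1)·sin²(φ₁/2)·(cos φ₂ − 1) + 2·sin φ₁·sin φ₂. -/

import Mathlib

open Complex Real

theorem stmt_1 (p φ₁ φ₂ : ℝ) :
    1 - ‖(1 - Complex.exp (Complex.I * φ₁) - Complex.exp (Complex.I * φ₂)) -
        (1 - Complex.exp (Complex.I * φ₁)) * (1 - Complex.exp (Complex.I * φ₂)) * (p : ℂ)‖ ^ 2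
      = (p - 1) * (4 * (2 * p - 1) * Real.sin (φ₁ / 2) ^ 2 * (Real.cos φ₂ - 1)
          + 2 * Real.sin φ₁ * Real.sin φ₂) := by
  have h1 : Complex.I * (φ₁ : ℂ) = (φ₁ : ℂ) * Complex.I := by ring
  have h2 : Complex.I * (φ₂ : ℂ) = (φ₂ : ℂ) * Complex.I := by ring
  rw [h1, h2, Complex.exp_mul_I, Complex.exp_mul_I, Complex.sq_norm]
  have hs1 : Real.sin (φ₁ / 2) ^ 2 = (1 - Real.cos φ₁) / 2 := by
    have h := Real.sin_sq_eq_half_sub (φ₁ / 2)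
    rw [show 2 * (φ₁ / 2) = φ₁ by ring] at h
    linarith
  have p1 : Real.sin φ₁ ^ 2 + Real.cos φ₁ ^ 2 = 1 := Real.sin_sq_add_cos_sq φ₁
  have p2 : Real.sin φ₂ ^ 2 + Real.cos φ₂ ^ 2 = 1 := Real.sin_sq_add_cos_sq φ₂
  rw [hs1]
  simp only [Complex.normSq_apply, Complex.sub_re, Complex.sub_im, Complex.mul_re,
    Complex.mul_im, Complex.one_re, Complex.one_im, Complex.add_re, Complex.add_im,
    Complex.ofReal_re, Complex.ofReal_im, Complex.cos_ofReal_re, Complex.cos_ofReal_im,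
    Complex.sin_ofReal_re, Complex.sin_ofReal_im, Complex.I_re, Complex.I_im]
  linear_combination
    (-1 + 2 * p - 2 * p * Real.cos φ₂ - p ^ 2 - p ^ 2 * Real.sin φ₂ ^ 2
      + 2 * p ^ 2 * Real.cos φ₂ - p ^ 2 * Real.cos φ₂ ^ 2) * p1 +
    (-1 + 2 * p - 2 * p * Real.cos φ₁ - 2 * p ^ 2 + 2 * p ^ 2 * Real.cos φ₁) * p2
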